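/- Let R ⊆ ℤ^d be finite, ℓ ≥ 0, and let B_ℓ, B_ℓ' be two ℓ-cubes (translates of [0, 2^ℓ)^d ∩ ℤ^d on the 2^ℓ-scaled lattice) sharing a face. If |B_ℓ ∩ R| ≥ |B_ℓ|/2 and |B_ℓ' ∩ R| < |B_ℓ'|/2, then there is a constant b₀ = b₀(d), depending only on d, such that 2^{ℓ(d−1)} ≤ b₀ |∂R ∩ (B_ℓ ∪ B_ℓ')|, where ∂R denotes the external boundary {s ∉ R : dist_∞(s, R) = 1}. -/

import Mathlib

/-- Points of the lattice `ℤ^d`. -/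
abbrev Pt (d : ℕ) := Fin d → ℤ

/-- Two lattice points are adjacent if they are distinct and at `L^∞`-distance at most 1
(i.e. exactly 1). -/
def adj {d : ℕ} (s t : Pt d) : Prop := s ≠ t ∧ ∀ i, |s i - t i| ≤ 1

/-- A set `R ⊆ ℤ^d` is connected if any two of its points are joined by a path inside `R`
whose consecutive points are at `L^∞`-distance 1. -/
def connectedIn {d : ℕ} (R : Set (Pt d)) : Prop :=
  ∀ s ∈ R, ∀ t ∈ R, Relation.ReflTransGen (fun a b => a ∈ R ∧ b ∈ R ∧ adj a b) s t

/-- The external boundary `∂R = {s ∉ R : dist_∞(s, R) = 1}`. -/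
def extBoundary {d : ℕ} (R : Set (Pt d)) : Set (Pt d) :=
  {s | s ∉ R ∧ ∃ t ∈ R, adj s t}

/-- The interior `Int R`: the union of the finite connected components of the complement. -/
def latticeInt {d : ℕ} (R : Set (Pt d)) : Set (Pt d) :=
  {s | s ∉ R ∧
    Set.Finite {t | Relation.ReflTransGen (fun a b => a ∉ R ∧ b ∉ R ∧ adj a b) s t}}

/-- The `ℓ`-cube based at `2^ℓ s`: `(∏_i [2^ℓ s_i, 2^ℓ (s_i+1))) ∩ ℤ^d`. -/
def cube {d : ℕ} (ℓ : ℕ) (s : Pt d) : Set (Pt d) :=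
  {t | ∀ i, 2 ^ ℓ * s i ≤ t i ∧ t i < 2 ^ ℓ * (s i + 1)}

/-- The coarse-grained region `B_ℓ(R)`: the union of all `ℓ`-cubes containing at least half
of their `2^{ℓ d}` points in `R`. -/
def coarse {d : ℕ} (ℓ : ℕ) (R : Set (Pt d)) : Set (Pt d) :=
  ⋃ s ∈ {s : Pt d | 2 ^ (ℓ * d) ≤ 2 * (cube ℓ s ∩ R).ncard}, cube ℓ s



lemma adj_symm {d : ℕ} {s t : Pt d} (h : adj s t) : adj t s :=
  ⟨h.1.symm, fun i => by simpa [abs_sub_comm] using h.2 i⟩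

/-- the set of points on the canonical monotone path from `a` to `b`. -/
def pathSet {d : ℕ} (a b : Pt d) : Set (Pt d) :=
  {v | ∃ k : Fin d, (∀ j, j < k → v j = b j) ∧ (∀ j, k < j → v j = a j) ∧
      min (a k) (b k) ≤ v k ∧ v k ≤ max (a k) (b k)}

lemma pathSet_coord {d : ℕ} {a b v : Pt d} (hv : v ∈ pathSet a b) (j : Fin d) :
    min (a j) (b j) ≤ v j ∧ v j ≤ max (a j) (b j) := by
  obtain ⟨k, h1, h2, h3, h4⟩ := hv
  rcases lt_trichotomy j k with h | h | h
  · rw [h1 j h]; exact ⟨min_le_right _ _, le_max_right _ _⟩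
  · subst h; exact ⟨h3, h4⟩
  · rw [h2 j h]; exact ⟨min_le_left _ _, le_max_left _ _⟩

lemma crossing {d : ℕ} (R P : Set (Pt d)) {a b : Pt d}
    (h : Relation.ReflTransGen (fun u v => u ∈ P ∧ v ∈ P ∧ adj u v) a b)
    (ha : a ∈ R) (hb : b ∉ R) : ∃ v ∈ P, v ∉ R ∧ ∃ t ∈ R, adj v t := by
  induction h with
  | refl => exact absurd ha hb
  | @tail m c hac hcb ih =>
    obtain ⟨hmP, hcP, hadj⟩ := hcb
    by_cases hmR : m ∈ R
    · exact ⟨c, hcP, hb, m, hmR, adj_symm hadj⟩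
    · exact ih hmR

lemma path_conn {d : ℕ} (a b : Pt d) :
    Relation.ReflTransGen (fun u v => u ∈ pathSet a b ∧ v ∈ pathSet a b ∧ adj u v) a b := by
  generalize hn : (∑ j, (a j - b j).natAbs) = n
  induction n using Nat.strong_induction_on generalizing a b with
  | _ n ih =>
  by_cases hab : a = b
  · subst hab; exact .refl
  · have hne : (Finset.univ.filter (fun j => a j ≠ b j)).Nonempty := by
      obtain ⟨k, hk⟩ := Function.ne_iff.mp hab
      exact ⟨k, by simp [hk]⟩
    set k := (Finset.univ.filter (fun j => a j ≠ b j)).min' hne with hkdef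
    have hkne : a k ≠ b k := by
      have := Finset.min'_mem _ hne; simpa [hkdef] using this
    have hklt : ∀ j, j < k → a j = b j := by
      intro j hj
      by_contra hne'
      exact absurd (Finset.min'_le _ j (by simp [hne'])) (not_le.mpr hj)
    set m : ℤ := if a k < b k then a k + 1 else a k - 1 with hm
    set a' := Function.update a k m with ha'
    have ha'k : a' k = m := Function.update_self _ _ _
    have ha'j : ∀ j, j ≠ k → a' j = a j := fun j hj => Function.update_of_ne hj _ _
    have hstep : (a k < b k ∧ m = a k + 1) ∨ (b k < a k ∧ m = a k - 1) := by
      rcases lt_or_gt_of_ne hkne with hc | hc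
      · exact Or.inl ⟨hc, by rw [hm, if_pos hc]⟩
      · exact Or.inr ⟨hc, by rw [hm, if_neg (not_lt.mpr hc.le)]⟩
    have hmb : min (a k) (b k) ≤ m ∧ m ≤ max (a k) (b k) := by omega
    have haP : a ∈ pathSet a b :=
      ⟨k, fun j hj => hklt j hj, fun _ _ => rfl, min_le_left _ _, le_max_left _ _⟩
    have ha'P : a' ∈ pathSet a b := by
      refine ⟨k, fun j hj => ?_, fun j hj => ha'j j (ne_of_gt hj), ?_, ?_⟩
      · rw [ha'j j (ne_of_lt hj)]; exact hklt j hj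
      · rw [ha'k]; exact hmb.1
      · rw [ha'k]; exact hmb.2
    have hadj : adj a a' := by
      constructor
      · intro h
        have := congrFun h k
        rw [ha'k] at this
        omega
      · intro j
        by_cases hj : j = k
        · subst hj; rw [ha'k, abs_le]; omega
        · rw [ha'j j hj]; simp
    have hsub : pathSet a' b ⊆ pathSet a b := by
      rintro v ⟨k', h1, h2, h3, h4⟩
      rcases lt_trichotomy k' k with hc | hc | hc
      · refine ⟨k, fun j hj => ?_, fun j hj => ?_, ?_, ?_⟩
        · rcases lt_trichotomy j k' with hj' | hj' | hj'
          · exact h1 j hj'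
          · subst hj'
            have e : a' j = a j := ha'j j (ne_of_lt hc)
            have e2 : a j = b j := hklt j hc
            rw [e, e2] at h3 h4
            simp at h3 h4
            omega
          · rw [h2 j hj', ha'j j (ne_of_lt hj)]
            exact hklt j hj
        · rw [h2 j (lt_trans hc hj), ha'j j (ne_of_gt hj)]
        · rw [h2 k hc, ha'k]; exact hmb.1
        · rw [h2 k hc, ha'k]; exact hmb.2
      · refine ⟨k, fun j hj => h1 j (hc ▸ hj), fun j hj => ?_, ?_, ?_⟩
        · rw [h2 j (hc ▸ hj), ha'j j (ne_of_gt hj)]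
        · have := hc ▸ h3; rw [ha'k] at this; omega
        · have := hc ▸ h4; rw [ha'k] at this; omega
      · refine ⟨k', h1, fun j hj => ?_, ?_, ?_⟩
        · rw [h2 j hj, ha'j j (ne_of_gt (lt_trans hc hj))]
        · rw [ha'j k' (ne_of_gt hc)] at h3; exact h3
        · rw [ha'j k' (ne_of_gt hc)] at h4; exact h4
    have hsum : (∑ j, (a' j - b j).natAbs) < n := by
      have he : ∀ j ∈ Finset.univ.erase k, (a' j - b j).natAbs = (a j - b j).natAbs := by
        intro j hj
        rw [ha'j j (Finset.mem_erase.mp hj).1]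
      have h1 : ∑ j, (a' j - b j).natAbs
          = (a' k - b k).natAbs + ∑ j ∈ Finset.univ.erase k, (a j - b j).natAbs := by
        rw [← Finset.add_sum_erase _ _ (Finset.mem_univ k), Finset.sum_congr rfl he]
      have h2 : n = (a k - b k).natAbs + ∑ j ∈ Finset.univ.erase k, (a j - b j).natAbs := by
        rw [← hn, ← Finset.add_sum_erase _ _ (Finset.mem_univ k)]
      have h3 : (a' k - b k).natAbs < (a k - b k).natAbs := by
        rw [ha'k]; omega
      omega
    have hmono : ∀ u v : Pt d, (u ∈ pathSet a' b ∧ v ∈ pathSet a' b ∧ adj u v) →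
        (u ∈ pathSet a b ∧ v ∈ pathSet a b ∧ adj u v) :=
      fun u v h => ⟨hsub h.1, hsub h.2.1, h.2.2⟩
    have htail := Relation.ReflTransGen.mono hmono _ _ (ih _ hsum a' b rfl)
    have hr : a ∈ pathSet a b ∧ a' ∈ pathSet a b ∧ adj a a' := ⟨haP, ha'P, hadj⟩
    exact Relation.ReflTransGen.head hr htail

/-- The `ℓ`-cube as a finset. -/
noncomputable def cubeF {d : ℕ} (ℓ : ℕ) (s : Pt d) : Finset (Pt d) :=
  Fintype.piFinset fun j => Finset.Ico (2 ^ ℓ * s j) (2 ^ ℓ * (s j + 1))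

lemma mem_cubeF {d ℓ : ℕ} {s t : Pt d} : t ∈ cubeF ℓ s ↔ t ∈ cube ℓ s := by
  simp [cubeF, cube, Fintype.mem_piFinset, Finset.mem_Ico]

lemma coe_cubeF {d ℓ : ℕ} (s : Pt d) : (↑(cubeF ℓ s) : Set (Pt d)) = cube ℓ s := by
  ext t; exact mem_cubeF

lemma card_cubeF {d ℓ : ℕ} (s : Pt d) : (cubeF ℓ s).card = 2 ^ (ℓ * d) := by
  rw [cubeF, Fintype.card_piFinset]
  have h : ∀ j : Fin d, (Finset.Ico (2 ^ ℓ * s j) (2 ^ ℓ * (s j + 1))).card = 2 ^ ℓ := by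
    intro j
    rw [Int.card_Ico]
    have e : (2 : ℤ) ^ ℓ * (s j + 1) - 2 ^ ℓ * s j = ((2 ^ ℓ : ℕ) : ℤ) := by push_cast; ring
    rw [e, Int.toNat_natCast]
  rw [Finset.prod_congr rfl (fun j _ => h j), Finset.prod_const, Finset.card_univ,
    Fintype.card_fin, ← pow_mul, mul_comm ℓ d]

lemma pathSet_subset_union {d ℓ : ℕ} (s : Pt d) (i : Fin d) {a b : Pt d}
    (ha : a ∈ cube ℓ s) (hb : b ∈ cube ℓ (Function.update s i (s i + 1))) :
    pathSet a b ⊆ cube ℓ s ∪ cube ℓ (Function.update s i (s i + 1)) := by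
  intro v hv
  have hpow : (0 : ℤ) < 2 ^ ℓ := by positivity
  have hs'i : Function.update s i (s i + 1) i = s i + 1 := Function.update_self _ _ _
  have hs'j : ∀ j, j ≠ i → Function.update s i (s i + 1) j = s j :=
    fun j hj => Function.update_of_ne hj _ _
  have ha' : ∀ j, 2 ^ ℓ * s j ≤ a j ∧ a j < 2 ^ ℓ * (s j + 1) := ha
  have hb' : ∀ j, 2 ^ ℓ * Function.update s i (s i + 1) j ≤ b j ∧
      b j < 2 ^ ℓ * (Function.update s i (s i + 1) j + 1) := hb
  have step : (2 : ℤ) ^ ℓ * s i ≤ 2 ^ ℓ * (s i + 1) :=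
    mul_le_mul_of_nonneg_left (by linarith) hpow.le
  have step2 : (2 : ℤ) ^ ℓ * (s i + 1) ≤ 2 ^ ℓ * (s i + 1 + 1) :=
    mul_le_mul_of_nonneg_left (by linarith) hpow.le
  by_cases hvi : v i < 2 ^ ℓ * (s i + 1)
  · left
    intro j
    have hco := pathSet_coord hv j
    have haj := ha' j
    have hbj := hb' j
    by_cases hj : j = i
    · subst hj
      rw [hs'i] at hbj
      exact ⟨le_trans (le_min haj.1 (le_trans step hbj.1)) hco.1, hvi⟩
    · rw [hs'j j hj] at hbj
      exact ⟨le_trans (le_min haj.1 hbj.1) hco.1, lt_of_le_of_lt hco.2 (max_lt haj.2 hbj.2)⟩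
  · right
    intro j
    have hco := pathSet_coord hv j
    have haj := ha' j
    have hbj := hb' j
    by_cases hj : j = i
    · subst hj
      rw [hs'i] at hbj ⊢
      exact ⟨not_lt.mp hvi, lt_of_le_of_lt hco.2 (max_lt (lt_of_lt_of_le haj.2 step2) hbj.2)⟩
    · rw [hs'j j hj] at hbj ⊢
      exact ⟨le_trans (le_min haj.1 hbj.1) hco.1, lt_of_le_of_lt hco.2 (max_lt haj.2 hbj.2)⟩

lemma card_IcoL {ℓ : ℕ} (x : ℤ) :
    (Finset.Ico (2 ^ ℓ * x) (2 ^ ℓ * (x + 1))).card = 2 ^ ℓ := by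
  rw [Int.card_Ico]
  have e : (2 : ℤ) ^ ℓ * (x + 1) - 2 ^ ℓ * x = ((2 ^ ℓ : ℕ) : ℤ) := by push_cast; ring
  rw [e, Int.toNat_natCast]

lemma fiber_bound {d ℓ : ℕ} (s s' : Pt d) (v : Pt d) (F : Finset (Pt d × Pt d))
    (hF : ∀ p ∈ F, p.1 ∈ cubeF ℓ s ∧ p.2 ∈ cubeF ℓ s' ∧ v ∈ pathSet p.1 p.2) :
    F.card ≤ d * (2 ^ ℓ) ^ (d + 1) := by
  classical
  set A : Fin d → Finset (Pt d × Pt d) := fun k =>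
    (cubeF ℓ s ×ˢ cubeF ℓ s').filter
      (fun p => (∀ j, k < j → p.1 j = v j) ∧ (∀ j, j < k → p.2 j = v j)) with hA
  have hsub : F ⊆ Finset.univ.biUnion A := by
    intro p hp
    obtain ⟨h1, h2, k, hk1, hk2, _, _⟩ := hF p hp
    refine Finset.mem_biUnion.mpr ⟨k, Finset.mem_univ _, ?_⟩
    rw [hA, Finset.mem_filter, Finset.mem_product]
    exact ⟨⟨h1, h2⟩, fun j hj => (hk2 j hj).symm, fun j hj => (hk1 j hj).symm⟩
  have hcardA : ∀ k : Fin d, (A k).card ≤ (2 ^ ℓ) ^ (d + 1) := by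
    intro k
    set W : Finset ((Pt d) × ℤ) :=
      (Fintype.piFinset fun j : Fin d =>
        if j ≤ k then Finset.Ico (2 ^ ℓ * s j) (2 ^ ℓ * (s j + 1))
        else Finset.Ico (2 ^ ℓ * s' j) (2 ^ ℓ * (s' j + 1))) ×ˢ
        Finset.Ico (2 ^ ℓ * s' k) (2 ^ ℓ * (s' k + 1)) with hW
    have hWcard : W.card = (2 ^ ℓ) ^ (d + 1) := by
      rw [hW, Finset.card_product, Fintype.card_piFinset]
      have : ∀ j : Fin d, (if j ≤ k then Finset.Ico (2 ^ ℓ * s j) (2 ^ ℓ * (s j + 1))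
          else Finset.Ico (2 ^ ℓ * s' j) (2 ^ ℓ * (s' j + 1))).card = 2 ^ ℓ := by
        intro j; split_ifs <;> exact card_IcoL _
      rw [Finset.prod_congr rfl (fun j _ => this j), Finset.prod_const, Finset.card_univ,
        Fintype.card_fin, card_IcoL, ← pow_succ]
    rw [← hWcard]
    apply Finset.card_le_card_of_injOn
      (fun p => (fun j => if j ≤ k then p.1 j else p.2 j, p.2 k))
    · intro p hp
      simp only [Finset.mem_coe, hA, Finset.mem_filter, Finset.mem_product] at hp
      obtain ⟨⟨hp1, hp2⟩, _, _⟩ := hp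
      rw [Finset.mem_coe, hW, Finset.mem_product]
      constructor
      · rw [Fintype.mem_piFinset]
        intro j
        show (if j ≤ k then p.1 j else p.2 j) ∈ _
        by_cases h : j ≤ k
        · simp only [if_pos h]; exact (Fintype.mem_piFinset.mp hp1) j
        · simp only [if_neg h]; exact (Fintype.mem_piFinset.mp hp2) j
      · simpa using (Fintype.mem_piFinset.mp hp2) k
    · intro p hp q hq heq
      have hp' := Finset.mem_coe.mp hp
      have hq' := Finset.mem_coe.mp hq
      rw [hA, Finset.mem_filter] at hp' hq'
      obtain ⟨-, hp3, hp4⟩ := hp'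
      obtain ⟨-, hq3, hq4⟩ := hq'
      have hfst := congrArg Prod.fst heq
      have hsnd := congrArg Prod.snd heq
      simp only at hfst hsnd
      have hfj : ∀ j, (if j ≤ k then p.1 j else p.2 j) = (if j ≤ k then q.1 j else q.2 j) :=
        fun j => congrFun hfst j
      have e1 : p.1 = q.1 := by
        funext j
        rcases le_or_gt j k with hj | hj
        · have := hfj j; rw [if_pos hj, if_pos hj] at this; exact this
        · rw [hp3 j hj, hq3 j hj]
      have e2 : p.2 = q.2 := by
        funext j
        rcases lt_trichotomy j k with hj | hj | hj
        · rw [hp4 j hj, hq4 j hj]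
        · subst hj; exact hsnd
        · have := hfj j; rw [if_neg (not_le.mpr hj), if_neg (not_le.mpr hj)] at this
          exact this
      exact Prod.ext e1 e2
  calc F.card ≤ (Finset.univ.biUnion A).card := Finset.card_le_card hsub
    _ ≤ ∑ k : Fin d, (A k).card := Finset.card_biUnion_le
    _ ≤ ∑ _k : Fin d, (2 ^ ℓ) ^ (d + 1) := Finset.sum_le_sum (fun k _ => hcardA k)
    _ = d * (2 ^ ℓ) ^ (d + 1) := by
        rw [Finset.sum_const, Finset.card_univ, Fintype.card_fin, smul_eq_mul]


/-- if an `ℓ`-cube is at least half inside a finite `R ⊆ ℤ^d` and a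
face-adjacent `ℓ`-cube is less than half inside `R`, then
`2^{ℓ(d-1)} ≤ b₀ |∂R ∩ (B_ℓ ∪ B_ℓ')|` for a constant `b₀` depending only on `d`. -/
theorem interface_forces_boundary (d : ℕ) (hd : 1 ≤ d) :
    ∃ b₀ : ℕ, 0 < b₀ ∧
      ∀ (R : Set (Pt d)), R.Finite → ∀ (ℓ : ℕ) (s : Pt d) (i : Fin d),
        2 ^ (ℓ * d) ≤ 2 * (cube ℓ s ∩ R).ncard →
        2 * (cube ℓ (Function.update s i (s i + 1)) ∩ R).ncard < 2 ^ (ℓ * d) →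
        2 ^ (ℓ * (d - 1))
          ≤ b₀ * (extBoundary R ∩ (cube ℓ s ∪ cube ℓ (Function.update s i (s i + 1)))).ncard := by
  classical
  refine ⟨4 * d, by omega, ?_⟩
  intro R hR ℓ s i hB hB'
  set s' := Function.update s i (s i + 1) with hs'def
  set L := 2 ^ ℓ with hLdef
  have hcubefin : ∀ t : Pt d, (cube ℓ t).Finite := fun t =>
    (coe_cubeF t) ▸ (cubeF ℓ t).finite_toSet
  have hSfin : (cube ℓ s ∩ R).Finite := (hcubefin s).inter_of_left _
  have hIfin : (cube ℓ s' ∩ R).Finite := (hcubefin s').inter_of_left _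
  have hTfin : (cube ℓ s' \ R).Finite := (hcubefin s').diff
  have hDfin : (extBoundary R ∩ (cube ℓ s ∪ cube ℓ s')).Finite :=
    ((hcubefin s).union (hcubefin s')).inter_of_right _
  set Sf := hSfin.toFinset with hSf
  set Tf := hTfin.toFinset with hTf
  set Df := hDfin.toFinset with hDf
  have hSfsub : ∀ p ∈ Sf, p ∈ cubeF ℓ s ∧ p ∈ R := by
    intro p hp
    rw [hSf, Set.Finite.mem_toFinset] at hp
    exact ⟨mem_cubeF.mpr hp.1, hp.2⟩
  have hTfsub : ∀ p ∈ Tf, p ∈ cubeF ℓ s' ∧ p ∉ R := by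
    intro p hp
    rw [hTf, Set.Finite.mem_toFinset] at hp
    exact ⟨mem_cubeF.mpr hp.1, hp.2⟩
  -- every pair of points (in `B ∩ R`, in `B' \ R`) yields a boundary point on its path
  have hkey : ∀ p ∈ Sf ×ˢ Tf, ∃ v ∈ Df, v ∈ pathSet p.1 p.2 := by
    intro p hp
    rw [Finset.mem_product] at hp
    obtain ⟨ha1, ha2⟩ := hSfsub p.1 hp.1
    obtain ⟨hb1, hb2⟩ := hTfsub p.2 hp.2
    have hac : p.1 ∈ cube ℓ s := mem_cubeF.mp ha1
    have hbc : p.2 ∈ cube ℓ s' := mem_cubeF.mp hb1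
    obtain ⟨v, hvP, hvR, t, htR, hadj⟩ := crossing R (pathSet p.1 p.2) (path_conn p.1 p.2) ha2 hb2
    refine ⟨v, ?_, hvP⟩
    rw [hDf, Set.Finite.mem_toFinset]
    exact ⟨⟨hvR, t, htR, hadj⟩, pathSet_subset_union s i hac hbc hvP⟩
  -- double counting
  have hcount : (Sf ×ˢ Tf).card ≤ Df.card * (d * L ^ (d + 1)) := by
    have hsub : Sf ×ˢ Tf ⊆
        Df.biUnion (fun v => (Sf ×ˢ Tf).filter (fun p => v ∈ pathSet p.1 p.2)) := by
      intro p hp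
      obtain ⟨v, hv, hvp⟩ := hkey p hp
      exact Finset.mem_biUnion.mpr ⟨v, hv, Finset.mem_filter.mpr ⟨hp, hvp⟩⟩
    calc (Sf ×ˢ Tf).card ≤ _ := Finset.card_le_card hsub
      _ ≤ ∑ v ∈ Df, ((Sf ×ˢ Tf).filter (fun p => v ∈ pathSet p.1 p.2)).card :=
          Finset.card_biUnion_le
      _ ≤ ∑ _v ∈ Df, d * L ^ (d + 1) := by
          refine Finset.sum_le_sum (fun v _ => ?_)
          refine fiber_bound s s' v _ (fun p hp => ?_)
          rw [Finset.mem_filter, Finset.mem_product] at hp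
          exact ⟨(hSfsub p.1 hp.1.1).1, (hTfsub p.2 hp.1.2).1, hp.2⟩
      _ = Df.card * (d * L ^ (d + 1)) := by rw [Finset.sum_const, smul_eq_mul]
  -- cardinality lower bounds
  have hSc : (cube ℓ s ∩ R).ncard = Sf.card := Set.ncard_eq_toFinset_card _ hSfin
  have hBc : 2 ^ (ℓ * d) ≤ 2 * Sf.card := by rw [← hSc]; exact hB
  have hTc : 2 ^ (ℓ * d) ≤ 2 * Tf.card := by
    have e1 : hIfin.toFinset = (cubeF ℓ s').filter (· ∈ R) := by
      ext t
      rw [Set.Finite.mem_toFinset, Finset.mem_filter]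
      exact ⟨fun h => ⟨mem_cubeF.mpr h.1, h.2⟩, fun h => ⟨mem_cubeF.mp h.1, h.2⟩⟩
    have e2 : Tf = (cubeF ℓ s').filter (fun t => ¬ t ∈ R) := by
      ext t
      rw [hTf, Set.Finite.mem_toFinset, Finset.mem_filter]
      exact ⟨fun h => ⟨mem_cubeF.mpr h.1, h.2⟩, fun h => ⟨mem_cubeF.mp h.1, h.2⟩⟩
    have hpart : (hIfin.toFinset).card + Tf.card = 2 ^ (ℓ * d) := by
      rw [e1, e2, Finset.card_filter_add_card_filter_not, card_cubeF]
    have hIc : (cube ℓ s' ∩ R).ncard = (hIfin.toFinset).card :=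
      Set.ncard_eq_toFinset_card _ hIfin
    rw [hIc] at hB'
    omega
  -- final arithmetic
  have hDc : (extBoundary R ∩ (cube ℓ s ∪ cube ℓ s')).ncard = Df.card :=
    Set.ncard_eq_toFinset_card _ hDfin
  have hLd : (2 : ℕ) ^ (ℓ * d) = L ^ d := by rw [hLdef, ← pow_mul]
  have hLpos : 0 < L ^ (d + 1) := by positivity
  have h1 : L ^ (d + 1) * L ^ (d - 1) ≤ L ^ (d + 1) * (4 * d * Df.card) := by
    have e : L ^ (d + 1) * L ^ (d - 1) = L ^ d * L ^ d := by
      rw [← pow_add, ← pow_add]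
      congr 1
      omega
    calc L ^ (d + 1) * L ^ (d - 1) = L ^ d * L ^ d := e
      _ ≤ (2 * Sf.card) * (2 * Tf.card) := Nat.mul_le_mul (hLd ▸ hBc) (hLd ▸ hTc)
      _ = 4 * (Sf.card * Tf.card) := by ring
      _ = 4 * (Sf ×ˢ Tf).card := by rw [Finset.card_product]
      _ ≤ 4 * (Df.card * (d * L ^ (d + 1))) := by
          exact Nat.mul_le_mul_left _ hcount
      _ = L ^ (d + 1) * (4 * d * Df.card) := by ring
  have h2 : L ^ (d - 1) ≤ 4 * d * Df.card := Nat.le_of_mul_le_mul_left h1 hLpos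
  rw [hDc]
  calc 2 ^ (ℓ * (d - 1)) = L ^ (d - 1) := by rw [hLdef, ← pow_mul]
    _ ≤ 4 * d * Df.card := h2
    _ = 4 * d * Df.card := rfl
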